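/- Let K ≥ 1, d ≥ K, n ≥ 1, and λ_{W2}, λ_{W1}, λ_{H1} > 0. Then the infimum over (W₂, W₁, H̄₁) ∈ ℝ^{K×d} × ℝ^{d×d} × ℝ^{d×K} of (1/(2K))‖W₂W₁H̄₁ − I_K‖_F² + (λ_{W2}/2)‖W₂‖_F² + (λ_{W1}/2)‖W₁‖_F² + (nλ_{H1}/2)‖H̄₁‖_F² equals the infimum over (W, H̄₁) ∈ ℝ^{K×d} × ℝ^{d×K} of (1/(2K))‖W·H̄₁ − I_K‖_F² + (nλ_{H1}/2)‖H̄₁‖_F² + √(λ_{W2}·λ_{W1})·‖W‖_*. -/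

import Mathlib

open Matrix Finset

noncomputable section

/-- Squared Frobenius norm of a real matrix. -/
def frobSq {m n : Type*} [Fintype m] [Fintype n] (A : Matrix m n ℝ) : ℝ :=
  ∑ i, ∑ j, (A i j) ^ 2

/-- The positive semidefinite square root of a positive semidefinite matrix
(the definition `Matrix.PosSemidef.sqrt` of the older Mathlib, since removed). -/
def posSemidefSqrtOld {n : Type*} [Fintype n] [DecidableEq n] {A : Matrix n n ℝ}
    (hA : A.PosSemidef) : Matrix n n ℝ :=
  (hA.isHermitian.eigenvectorUnitary : Matrix n n ℝ) *
    diagonal ((√·) ∘ hA.isHermitian.eigenvalues) *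
    (star hA.isHermitian.eigenvectorUnitary : Matrix n n ℝ)

/-- Nuclear norm of a real matrix: trace of the PSD square root of `ZᵀZ`
(= `ZᴴZ` over `ℝ`), i.e., the sum of the singular values. -/
def nuclearNorm {m n : Type*} [Fintype m] [Fintype n] [DecidableEq n]
    (Z : Matrix m n ℝ) : ℝ :=
  (posSemidefSqrtOld (Matrix.posSemidef_conjTranspose_mul_self Z)).trace

lemma frobSq_nonneg {m n : Type*} [Fintype m] [Fintype n] (A : Matrix m n ℝ) : 0 ≤ frobSq A :=
  Finset.sum_nonneg fun _ _ => Finset.sum_nonneg fun _ _ => sq_nonneg _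

lemma frobSq_eq_trace {m n : Type*} [Fintype m] [Fintype n] (A : Matrix m n ℝ) :
    frobSq A = (Aᴴ * A).trace := by
  simp only [frobSq, trace, diag_apply, mul_apply, conjTranspose_apply, star_trivial]
  rw [Finset.sum_comm]
  simp [sq]

lemma frobSq_eq_zero {m n : Type*} [Fintype m] [Fintype n] {A : Matrix m n ℝ}
    (h : frobSq A = 0) : A = 0 := by
  ext i j
  have := (Finset.sum_eq_zero_iff_of_nonneg (fun i _ => Finset.sum_nonneg fun j _ => sq_nonneg (A i j))).mp h i (mem_univ i)
  have := (Finset.sum_eq_zero_iff_of_nonneg (fun j _ => sq_nonneg (A i j))).mp this j (mem_univ j)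
  simpa using pow_eq_zero_iff (n := 2) (by norm_num) |>.mp this

lemma frobSq_smul {m n : Type*} [Fintype m] [Fintype n] (c : ℝ) (A : Matrix m n ℝ) :
    frobSq (c • A) = c ^ 2 * frobSq A := by
  simp [frobSq, Finset.mul_sum, mul_pow]

lemma trace_conjTranspose_mul {m n : Type*} [Fintype m] [Fintype n]
    (X Y : Matrix m n ℝ) : (Xᴴ * Y).trace = ∑ p, ∑ q, X p q * Y p q := by
  simp only [trace, diag_apply, mul_apply, conjTranspose_apply, star_trivial]
  rw [Finset.sum_comm]


section
variable {m n : Type*} [Fintype m] [Fintype n] [DecidableEq n]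

/-- Eigenvector unitary of `ZᴴZ`. -/
def egV (Z : Matrix m n ℝ) : Matrix n n ℝ :=
  ((Matrix.posSemidef_conjTranspose_mul_self Z).1.eigenvectorUnitary : Matrix n n ℝ)

/-- Eigenvalues of `ZᴴZ`. -/
def egL (Z : Matrix m n ℝ) : n → ℝ :=
  (Matrix.posSemidef_conjTranspose_mul_self Z).1.eigenvalues

variable (Z : Matrix m n ℝ)

lemma egL_nonneg (i : n) : 0 ≤ egL Z i :=
  (Matrix.posSemidef_conjTranspose_mul_self Z).eigenvalues_nonneg i

lemma V_mul_starV : egV Z * star (egV Z) = 1 :=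
  Matrix.mem_unitaryGroup_iff.mp
    ((Matrix.posSemidef_conjTranspose_mul_self Z).1.eigenvectorUnitary).2

lemma starV_mul_V : star (egV Z) * egV Z = 1 :=
  Matrix.mem_unitaryGroup_iff'.mp
    ((Matrix.posSemidef_conjTranspose_mul_self Z).1.eigenvectorUnitary).2

lemma spectral : Zᴴ * Z = egV Z * diagonal (egL Z) * star (egV Z) := by
  have h := (Matrix.posSemidef_conjTranspose_mul_self Z).1.spectral_theorem
  simpa [egV, egL] using h

lemma trace_VdV (f : n → ℝ) : (egV Z * diagonal f * star (egV Z)).trace = ∑ i, f i := by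
  rw [trace_mul_cycle, starV_mul_V, Matrix.one_mul, trace_diagonal]

lemma nuclearNorm_eq : nuclearNorm Z = ∑ i, Real.sqrt (egL Z i) := by
  rw [nuclearNorm, posSemidefSqrtOld]
  have := trace_VdV Z (fun i => Real.sqrt (egL Z i))
  exact this

lemma nuclearNorm_nonneg : 0 ≤ nuclearNorm Z := by
  rw [nuclearNorm_eq]
  exact Finset.sum_nonneg fun _ _ => Real.sqrt_nonneg _

end
noncomputable section

section
variable {m n : Type*} [Fintype m] [Fintype n] [DecidableEq n] (Z : Matrix m n ℝ)

lemma VdV_conjTranspose (f : n → ℝ) :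
    (egV Z * diagonal f * star (egV Z))ᴴ = egV Z * diagonal f * star (egV Z) := by
  simp only [conjTranspose_mul, ← Matrix.star_eq_conjTranspose, star_star,
    diagonal_conjTranspose, star_trivial, Matrix.mul_assoc]
  simp [Matrix.star_eq_conjTranspose, diagonal_conjTranspose, Matrix.mul_assoc]

lemma VdV_mul (f h : n → ℝ) :
    (egV Z * diagonal f * star (egV Z)) * (egV Z * diagonal h * star (egV Z))
      = egV Z * diagonal (fun i => f i * h i) * star (egV Z) := by
  have h2 : star (egV Z) * (egV Z * diagonal h * star (egV Z)) = diagonal h * star (egV Z) := by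
    rw [← Matrix.mul_assoc, ← Matrix.mul_assoc, starV_mul_V, Matrix.one_mul]
  calc (egV Z * diagonal f * star (egV Z)) * (egV Z * diagonal h * star (egV Z))
      = egV Z * diagonal f * (star (egV Z) * (egV Z * diagonal h * star (egV Z))) := by
        rw [Matrix.mul_assoc]
    _ = egV Z * (diagonal f * (diagonal h * star (egV Z))) := by rw [h2, Matrix.mul_assoc]
    _ = egV Z * diagonal (fun i => f i * h i) * star (egV Z) := by
        rw [← Matrix.mul_assoc (diagonal f) (diagonal h) (star (egV Z)),
          diagonal_mul_diagonal, ← Matrix.mul_assoc]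

lemma VdV_one : egV Z * diagonal (fun _ : n => (1:ℝ)) * star (egV Z) = 1 := by
  have : diagonal (fun _ : n => (1:ℝ)) = 1 := diagonal_one
  rw [this, Matrix.mul_one, V_mul_starV]

lemma frobSq_VdV (f : n → ℝ) :
    frobSq (egV Z * diagonal f * star (egV Z)) = ∑ i, (f i)^2 := by
  rw [frobSq_eq_trace, VdV_conjTranspose, VdV_mul]
  rw [trace_VdV]
  simp [sq]

lemma frobSq_mul_VdV (f : n → ℝ) :
    frobSq (Z * (egV Z * diagonal f * star (egV Z))) = ∑ i, (f i)^2 * egL Z i := by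
  rw [frobSq_eq_trace, conjTranspose_mul, VdV_conjTranspose]
  have : (egV Z * diagonal f * star (egV Z)) * Zᴴ * (Z * (egV Z * diagonal f * star (egV Z)))
      = (egV Z * diagonal f * star (egV Z)) * ((Zᴴ * Z) * (egV Z * diagonal f * star (egV Z))) := by
    simp only [Matrix.mul_assoc]
  rw [this, spectral, VdV_mul, VdV_mul, trace_VdV]
  apply Finset.sum_congr rfl
  intro i _
  ring

lemma mul_VdV_e : Z * (egV Z * diagonal (fun i => if egL Z i = 0 then 0 else (1:ℝ))
    * star (egV Z)) = Z := by
  set e : n → ℝ := fun i => if egL Z i = 0 then 0 else (1:ℝ) with he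
  set f : n → ℝ := fun i => 1 - e i with hf
  have hzero : Z * (egV Z * diagonal f * star (egV Z)) = 0 := by
    apply frobSq_eq_zero
    rw [frobSq_mul_VdV]
    apply Finset.sum_eq_zero
    intro i _
    by_cases h : egL Z i = 0 <;> simp [hf, he, h]
  have hsum : diagonal e + diagonal f = diagonal (fun _ => (1:ℝ)) := by
    rw [diagonal_add]
    congr! with i
    simp [hf]
  have : Z * (egV Z * diagonal e * star (egV Z)) + Z * (egV Z * diagonal f * star (egV Z)) = Z := by
    rw [← Matrix.mul_add, ← Matrix.add_mul, ← Matrix.mul_add, hsum, VdV_one, Matrix.mul_one]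
  rw [hzero, add_zero] at this
  exact this

end

lemma exists_factor {k n : Type*} [Fintype k] [Fintype n] [DecidableEq n]
    (W : Matrix k n ℝ) (c : ℝ) (hc : 0 < c) :
    ∃ (W2 : Matrix k n ℝ) (W1 : Matrix n n ℝ), W2 * W1 = W ∧
      frobSq W2 ≤ c * nuclearNorm W ∧ frobSq W1 ≤ c⁻¹ * nuclearNorm W := by
  set lam := egL W with hlam
  set g : n → ℝ := fun i => Real.sqrt (Real.sqrt (lam i)) with hg
  set g' : n → ℝ := fun i => if lam i = 0 then 0 else (g i)⁻¹ with hg'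
  set a := Real.sqrt c with ha
  have ha0 : 0 < a := Real.sqrt_pos.mpr hc
  have ha2 : a ^ 2 = c := Real.sq_sqrt hc.le
  refine ⟨a • (W * (egV W * diagonal g' * star (egV W))),
          a⁻¹ • (egV W * diagonal g * star (egV W)), ?_, ?_, ?_⟩
  · rw [Matrix.smul_mul, Matrix.mul_smul, smul_smul, mul_inv_cancel₀ ha0.ne', one_smul]
    have hfun : (fun i => g' i * g i) = (fun i => if egL W i = 0 then 0 else (1:ℝ)) := by
      funext i
      by_cases h : lam i = 0
      · simp [hg', ← hlam, h]
      · have hpos : 0 < lam i := lt_of_le_of_ne (egL_nonneg W i) (Ne.symm h)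
        have hgne : g i ≠ 0 := by
          simp only [hg]
          positivity
      
        simp [hg', ← hlam, h, inv_mul_cancel₀ hgne]
    calc W * (egV W * diagonal g' * star (egV W)) * (egV W * diagonal g * star (egV W))
        = W * ((egV W * diagonal g' * star (egV W)) * (egV W * diagonal g * star (egV W))) := by
          rw [Matrix.mul_assoc]
      _ = W * (egV W * diagonal (fun i => g' i * g i) * star (egV W)) := by rw [VdV_mul]
      _ = W * (egV W * diagonal (fun i => if egL W i = 0 then 0 else (1:ℝ)) * star (egV W)) := by
          rw [hfun]
      _ = W := mul_VdV_e W
  · rw [frobSq_smul, ha2, frobSq_mul_VdV, nuclearNorm_eq]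
    apply mul_le_mul_of_nonneg_left _ hc.le
    apply Finset.sum_le_sum
    intro i _
    by_cases h : lam i = 0
    · simp [hg', ← hlam, h, Real.sqrt_nonneg]
    · have hpos : 0 < lam i := lt_of_le_of_ne (egL_nonneg W i) (Ne.symm h)
      have hs : Real.sqrt (lam i) > 0 := Real.sqrt_pos.mpr hpos
      have h4 : g i ^ 2 = Real.sqrt (lam i) := Real.sq_sqrt (Real.sqrt_nonneg _)
      have : g' i ^ 2 * lam i = Real.sqrt (lam i) := by
        rw [hg']
        simp only [h, if_false]
        rw [inv_pow, h4, inv_mul_eq_div, div_eq_iff hs.ne']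
        exact (Real.mul_self_sqrt hpos.le).symm
      rw [← hlam, this]
  · rw [frobSq_smul, frobSq_VdV, nuclearNorm_eq]
    have : a⁻¹ ^ 2 = c⁻¹ := by rw [inv_pow, ha2]
    rw [this]
    apply mul_le_mul_of_nonneg_left _ (inv_nonneg.mpr hc.le)
    apply Finset.sum_le_sum
    intro i _
    rw [hg, Real.sq_sqrt (Real.sqrt_nonneg _), ← hlam]

section
variable {k m n : Type*} [Fintype k] [Fintype m] [Fintype n] [DecidableEq n]

lemma trace_le_sqrt_frobSq_mul (X : Matrix k n ℝ) (Y : Matrix k n ℝ) :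
    (Xᴴ * Y).trace ≤ Real.sqrt (frobSq X) * Real.sqrt (frobSq Y) := by
  rw [trace_conjTranspose_mul]
  have h2 : frobSq X = ∑ x : k × n, (X x.1 x.2) ^ 2 := by
    rw [frobSq, Fintype.sum_prod_type]
  have h3 : frobSq Y = ∑ x : k × n, (Y x.1 x.2) ^ 2 := by
    rw [frobSq, Fintype.sum_prod_type]
  have h1 : ∑ p, ∑ q, X p q * Y p q = ∑ x : k × n, X x.1 x.2 * Y x.1 x.2 := by
    rw [Fintype.sum_prod_type]
  rw [h1]
  set t := ∑ x : k × n, X x.1 x.2 * Y x.1 x.2 with ht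
  have hcs : t ^ 2 ≤ frobSq X * frobSq Y := by
    rw [h2, h3]
    exact Finset.sum_mul_sq_le_sq_mul_sq univ _ _
  calc t ≤ |t| := le_abs_self t
    _ = Real.sqrt (t ^ 2) := (Real.sqrt_sq_eq_abs t).symm
    _ ≤ Real.sqrt (frobSq X * frobSq Y) := Real.sqrt_le_sqrt hcs
    _ = Real.sqrt (frobSq X) * Real.sqrt (frobSq Y) := Real.sqrt_mul (frobSq_nonneg X) _

lemma nuclearNorm_mul_le [DecidableEq k] (A : Matrix k m ℝ) (B : Matrix m n ℝ) :
    nuclearNorm (A * B) ≤ Real.sqrt (frobSq A) * Real.sqrt (frobSq B) := by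
  set Z := A * B with hZ
  set V := egV Z with hV
  set lam := egL Z with hlam
  have hsp : Zᴴ * Z = V * diagonal lam * star V := spectral Z
  set M := Z * V with hM
  set N := B * V with hN
  set E : Matrix n n ℝ := diagonal (fun i => if lam i = 0 then 0 else (Real.sqrt (lam i))⁻¹)
    with hE
  set U := M * E with hU
  -- M columns are orthogonal with norms √lam
  have h1 : Mᴴ * M = diagonal lam := by
    rw [hM, conjTranspose_mul, ← Matrix.star_eq_conjTranspose V]
    calc star V * Zᴴ * (Z * V) = star V * ((Zᴴ * Z) * V) := by simp only [Matrix.mul_assoc]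
      _ = star V * (V * diagonal lam * (star V * V)) := by
          rw [hsp]; simp only [Matrix.mul_assoc]
      _ = diagonal lam := by
          rw [starV_mul_V, Matrix.mul_one, ← Matrix.mul_assoc, starV_mul_V, Matrix.one_mul]
  have hME : Mᴴ * U = diagonal (fun i => Real.sqrt (lam i)) := by
    rw [hU, ← Matrix.mul_assoc, h1, hE, diagonal_mul_diagonal]
    rw [diagonal_eq_diagonal_iff]
    intro i
    by_cases h : lam i = 0
    · simp [h]
    · have hpos : 0 < lam i := lt_of_le_of_ne (egL_nonneg Z i) (Ne.symm h)
      rw [if_neg h, mul_inv_eq_iff_eq_mul₀ (Real.sqrt_pos.mpr hpos).ne']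
      exact (Real.mul_self_sqrt hpos.le).symm
  -- nuclear norm as a trace
  have h2 : nuclearNorm Z = (Uᴴ * M).trace := by
    have : Uᴴ * M = (Mᴴ * U)ᴴ := by simp
    rw [this, hME, nuclearNorm_eq, diagonal_conjTranspose, trace_diagonal]
    simp
    rfl
  -- U has orthonormal (or zero) columns
  have hUU : Uᴴ * U = diagonal (fun i => if lam i = 0 then 0 else (1:ℝ)) := by
    rw [hU, conjTranspose_mul, Matrix.mul_assoc, ← Matrix.mul_assoc Mᴴ, h1, hE,
      diagonal_conjTranspose, ← Matrix.mul_assoc, diagonal_mul_diagonal, diagonal_mul_diagonal]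
    rw [diagonal_eq_diagonal_iff]
    intro i
    by_cases h : lam i = 0
    · simp [h]
    · have hpos : 0 < lam i := lt_of_le_of_ne (egL_nonneg Z i) (Ne.symm h)
      simp only [Pi.star_apply, star_trivial, h, if_false]
      rw [show (Real.sqrt (lam i))⁻¹ * lam i * (Real.sqrt (lam i))⁻¹
          = lam i / (Real.sqrt (lam i) * Real.sqrt (lam i)) from by ring,
        Real.mul_self_sqrt hpos.le, div_self hpos.ne']
  have hUe : U * diagonal (fun i => if lam i = 0 then 0 else (1:ℝ)) = U := by
    rw [hU, Matrix.mul_assoc, hE, diagonal_mul_diagonal]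
    congr 1
    rw [diagonal_eq_diagonal_iff]
    intro i
    by_cases h : lam i = 0 <;> simp [h]
  -- projection bound : frobSq (Aᴴ * U) ≤ frobSq A
  have hproj : frobSq (Aᴴ * U) ≤ frobSq A := by
    set P := U * Uᴴ with hP
    have hPidem : P * P = P := by
      rw [hP, Matrix.mul_assoc, ← Matrix.mul_assoc Uᴴ, hUU, ← Matrix.mul_assoc, hUe]
    have hPsymm : Pᴴ = P := by rw [hP, conjTranspose_mul, conjTranspose_conjTranspose]
    set R := (1 : Matrix k k ℝ) - P with hR
    have hRsymm : Rᴴ = R := by rw [hR, conjTranspose_sub, conjTranspose_one, hPsymm]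
    have hRidem : R * R = R := by
      rw [hR]
      simp only [Matrix.sub_mul, Matrix.mul_sub, Matrix.one_mul, Matrix.mul_one, hPidem]
      rw [sub_self, sub_zero]
    have key : frobSq (Aᴴ * U) = ((A * Aᴴ) * P).trace := by
      rw [frobSq_eq_trace, conjTranspose_mul, conjTranspose_conjTranspose]
      calc (Uᴴ * A * (Aᴴ * U)).trace = ((Uᴴ * (A * Aᴴ)) * U).trace := by
            simp only [Matrix.mul_assoc]
        _ = ((A * Aᴴ) * (U * Uᴴ)).trace := by
            rw [trace_mul_cycle Uᴴ (A * Aᴴ) U, trace_mul_comm (U * Uᴴ) (A * Aᴴ)]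
        _ = ((A * Aᴴ) * P).trace := by rw [hP]
    have hA : frobSq A = (A * Aᴴ).trace := by
      rw [frobSq_eq_trace, trace_mul_comm]
    have hrest : 0 ≤ ((A * Aᴴ) * R).trace := by
      have : (A * Aᴴ) * R = A * (Aᴴ * R) := by rw [Matrix.mul_assoc]
      have hfs : ((Aᴴ * R)ᴴ * (Aᴴ * R)).trace = (A * Aᴴ * (R * R)).trace := by
        rw [conjTranspose_mul, conjTranspose_conjTranspose, hRsymm]
        calc (R * A * (Aᴴ * R)).trace = (R * (A * Aᴴ) * R).trace := by
              simp only [Matrix.mul_assoc]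
          _ = (A * Aᴴ * (R * R)).trace := by
              rw [trace_mul_cycle R (A * Aᴴ) R, trace_mul_comm (R * R) (A * Aᴴ)]
      have := frobSq_nonneg (Aᴴ * R)
      rw [frobSq_eq_trace, hfs, hRidem] at this
      exact this
    have split : (A * Aᴴ).trace = ((A * Aᴴ) * P).trace + ((A * Aᴴ) * R).trace := by
      have hsplit1 : P + ((1 : Matrix k k ℝ) - P) = 1 := add_sub_cancel P 1
      rw [← trace_add, ← Matrix.mul_add, hR, hsplit1, Matrix.mul_one]
    rw [key, hA, split]
    linarith
  -- frobSq N = frobSq B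
  have hNB : frobSq N = frobSq B := by
    rw [hN, frobSq_eq_trace, frobSq_eq_trace, conjTranspose_mul,
      ← Matrix.star_eq_conjTranspose V]
    calc (star V * Bᴴ * (B * V)).trace
        = (star V * (Bᴴ * B) * V).trace := by simp only [Matrix.mul_assoc]
      _ = (V * star V * (Bᴴ * B)).trace := trace_mul_cycle (star V) (Bᴴ * B) V
      _ = ((Bᴴ * B) * (V * star V)).trace := trace_mul_comm _ _
      _ = (Bᴴ * B).trace := by rw [V_mul_starV, Matrix.mul_one]
  -- put it together
  have h3 : (Uᴴ * M).trace = ((Aᴴ * U)ᴴ * N).trace := by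
    have hMAN : M = A * N := by rw [hM, hN, hZ, Matrix.mul_assoc]
    have hrw : (Aᴴ * U)ᴴ * N = Uᴴ * (A * N) := by
      rw [conjTranspose_mul, conjTranspose_conjTranspose, Matrix.mul_assoc]
    rw [hrw, ← hMAN]
  calc nuclearNorm Z = ((Aᴴ * U)ᴴ * N).trace := by rw [h2, h3]
    _ ≤ Real.sqrt (frobSq (Aᴴ * U)) * Real.sqrt (frobSq N) := trace_le_sqrt_frobSq_mul _ _
    _ ≤ Real.sqrt (frobSq A) * Real.sqrt (frobSq B) := by
        rw [hNB]
        exact mul_le_mul_of_nonneg_right (Real.sqrt_le_sqrt hproj) (Real.sqrt_nonneg _)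

end
lemma bddBelow_range_of_nonneg {α : Sort*} (f : α → ℝ) (h : ∀ a, 0 ≤ f a) :
    BddBelow (Set.range f) := ⟨0, by rintro _ ⟨a, rfl⟩; exact h a⟩

/-- Reduction of the three-factor extended UFM objective to a two-factor objective with
a nuclear-norm penalty on the composite weight matrix `W = W₂W₁`:
`inf_{W₂,W₁,H̄₁} (1/(2K))‖W₂W₁H̄₁ − I‖² + (λ_{W2}/2)‖W₂‖² + (λ_{W1}/2)‖W₁‖² + (nλ_{H1}/2)‖H̄₁‖²
 = inf_{W,H̄₁} (1/(2K))‖WH̄₁ − I‖² + (nλ_{H1}/2)‖H̄₁‖² + √(λ_{W2}λ_{W1})‖W‖_*`. -/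
theorem three_factor_reduces_to_nuclear_on_weights
    (K d n : ℕ) (hK : 1 ≤ K) (hd : K ≤ d) (hn : 1 ≤ n)
    (lW2 lW1 lH1 : ℝ) (hlW2 : 0 < lW2) (hlW1 : 0 < lW1) (hlH1 : 0 < lH1) :
    (⨅ W2 : Matrix (Fin K) (Fin d) ℝ, ⨅ W1 : Matrix (Fin d) (Fin d) ℝ,
      ⨅ Hb1 : Matrix (Fin d) (Fin K) ℝ,
        (1 / (2 * (K : ℝ)) * frobSq (W2 * W1 * Hb1 - 1)
          + lW2 / 2 * frobSq W2 + lW1 / 2 * frobSq W1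
          + ((n : ℝ) * lH1) / 2 * frobSq Hb1))
    = ⨅ W : Matrix (Fin K) (Fin d) ℝ, ⨅ Hb1 : Matrix (Fin d) (Fin K) ℝ,
        (1 / (2 * (K : ℝ)) * frobSq (W * Hb1 - 1)
          + ((n : ℝ) * lH1) / 2 * frobSq Hb1
          + Real.sqrt (lW2 * lW1) * nuclearNorm W) := by
  have hKpos : (0:ℝ) < (K:ℝ) := by exact_mod_cast Nat.pos_of_ne_zero (by omega)
  have hco : (0:ℝ) ≤ 1 / (2 * (K:ℝ)) := by positivity
  have hnl : (0:ℝ) ≤ ((n:ℝ) * lH1) / 2 := by positivity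
  set f3 : Matrix (Fin K) (Fin d) ℝ → Matrix (Fin d) (Fin d) ℝ →
      Matrix (Fin d) (Fin K) ℝ → ℝ := fun W2 W1 Hb1 =>
    1 / (2 * (K : ℝ)) * frobSq (W2 * W1 * Hb1 - 1)
      + lW2 / 2 * frobSq W2 + lW1 / 2 * frobSq W1
      + ((n : ℝ) * lH1) / 2 * frobSq Hb1 with hf3
  set g2 : Matrix (Fin K) (Fin d) ℝ → Matrix (Fin d) (Fin K) ℝ → ℝ := fun W Hb1 =>
    1 / (2 * (K : ℝ)) * frobSq (W * Hb1 - 1)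
      + ((n : ℝ) * lH1) / 2 * frobSq Hb1
      + Real.sqrt (lW2 * lW1) * nuclearNorm W with hg2
  have hf3nn : ∀ W2 W1 Hb1, 0 ≤ f3 W2 W1 Hb1 := by
    intro W2 W1 Hb1
    have := frobSq_nonneg (W2 * W1 * Hb1 - 1)
    have := frobSq_nonneg W2
    have := frobSq_nonneg W1
    have := frobSq_nonneg Hb1
    have h1 : 0 ≤ 1 / (2 * (K : ℝ)) * frobSq (W2 * W1 * Hb1 - 1) := by positivity
    have h2 : 0 ≤ lW2 / 2 * frobSq W2 := by positivity
    have h3 : 0 ≤ lW1 / 2 * frobSq W1 := by positivity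
    have h4 : 0 ≤ ((n : ℝ) * lH1) / 2 * frobSq Hb1 := by positivity
    simp only [hf3]
    linarith
  have hg2nn : ∀ W Hb1, 0 ≤ g2 W Hb1 := by
    intro W Hb1
    have := frobSq_nonneg (W * Hb1 - 1)
    have := frobSq_nonneg Hb1
    have := nuclearNorm_nonneg W
    have h1 : 0 ≤ 1 / (2 * (K : ℝ)) * frobSq (W * Hb1 - 1) := by positivity
    have h2 : 0 ≤ ((n : ℝ) * lH1) / 2 * frobSq Hb1 := by positivity
    have h3 : 0 ≤ Real.sqrt (lW2 * lW1) * nuclearNorm W :=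
      mul_nonneg (Real.sqrt_nonneg _) (nuclearNorm_nonneg W)
    simp only [hg2]
    linarith
  have hs2 : (0:ℝ) < Real.sqrt lW2 := Real.sqrt_pos.mpr hlW2
  have hs1 : (0:ℝ) < Real.sqrt lW1 := Real.sqrt_pos.mpr hlW1
  have hmul : Real.sqrt (lW2 * lW1) = Real.sqrt lW2 * Real.sqrt lW1 :=
    Real.sqrt_mul hlW2.le _
  have hsq2 : Real.sqrt lW2 ^ 2 = lW2 := Real.sq_sqrt hlW2.le
  have hsq1 : Real.sqrt lW1 ^ 2 = lW1 := Real.sq_sqrt hlW1.le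
  apply le_antisymm
  · -- LHS ≤ RHS
    refine le_ciInf fun W => le_ciInf fun Hb1 => ?_
    set c := Real.sqrt lW1 / Real.sqrt lW2 with hc
    have hcpos : 0 < c := div_pos hs1 hs2
    obtain ⟨W2, W1, hfac, hW2, hW1⟩ := exists_factor W c hcpos
    have hnnW := nuclearNorm_nonneg W
    have hkey : lW2 / 2 * frobSq W2 + lW1 / 2 * frobSq W1
        ≤ Real.sqrt (lW2 * lW1) * nuclearNorm W := by
      have a2 : lW2 / 2 * frobSq W2 ≤ lW2 / 2 * (c * nuclearNorm W) :=
        mul_le_mul_of_nonneg_left hW2 (by positivity)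
      have a1 : lW1 / 2 * frobSq W1 ≤ lW1 / 2 * (c⁻¹ * nuclearNorm W) :=
        mul_le_mul_of_nonneg_left hW1 (by positivity)
      have h22 : lW2 * c = Real.sqrt lW2 * Real.sqrt lW1 := by
        rw [hc, show lW2 * (Real.sqrt lW1 / Real.sqrt lW2)
            = lW2 / Real.sqrt lW2 * Real.sqrt lW1 from by ring, Real.div_sqrt]
      have h11 : lW1 * c⁻¹ = Real.sqrt lW2 * Real.sqrt lW1 := by
        rw [hc, inv_div, show lW1 * (Real.sqrt lW2 / Real.sqrt lW1)
            = lW1 / Real.sqrt lW1 * Real.sqrt lW2 from by ring, Real.div_sqrt]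
        ring
      have e2 : lW2 / 2 * (c * nuclearNorm W)
          = Real.sqrt (lW2 * lW1) / 2 * nuclearNorm W := by
        rw [hmul]
        calc lW2 / 2 * (c * nuclearNorm W) = lW2 * c * nuclearNorm W / 2 := by ring
          _ = Real.sqrt lW2 * Real.sqrt lW1 * nuclearNorm W / 2 := by rw [h22]
          _ = Real.sqrt lW2 * Real.sqrt lW1 / 2 * nuclearNorm W := by ring
      have e1 : lW1 / 2 * (c⁻¹ * nuclearNorm W)
          = Real.sqrt (lW2 * lW1) / 2 * nuclearNorm W := by
        rw [hmul]
        calc lW1 / 2 * (c⁻¹ * nuclearNorm W) = lW1 * c⁻¹ * nuclearNorm W / 2 := by ring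
          _ = Real.sqrt lW2 * Real.sqrt lW1 * nuclearNorm W / 2 := by rw [h11]
          _ = Real.sqrt lW2 * Real.sqrt lW1 / 2 * nuclearNorm W := by ring
      linarith
    have step : f3 W2 W1 Hb1 ≤ g2 W Hb1 := by
      simp only [hf3, hg2, hfac]
      linarith
    have b3 : BddBelow (Set.range fun Hb1' => f3 W2 W1 Hb1') :=
      bddBelow_range_of_nonneg _ fun Hb1' => hf3nn W2 W1 Hb1'
    have b2 : BddBelow (Set.range fun W1' => ⨅ Hb1', f3 W2 W1' Hb1') :=
      bddBelow_range_of_nonneg _ fun W1' =>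
        Real.iInf_nonneg fun Hb1' => hf3nn W2 W1' Hb1'
    have b1 : BddBelow (Set.range fun W2' : Matrix (Fin K) (Fin d) ℝ =>
        ⨅ W1', ⨅ Hb1', f3 W2' W1' Hb1') :=
      bddBelow_range_of_nonneg _ fun W2' =>
        Real.iInf_nonneg fun W1' => Real.iInf_nonneg fun Hb1' => hf3nn W2' W1' Hb1'
    calc (⨅ W2', ⨅ W1', ⨅ Hb1', f3 W2' W1' Hb1')
        ≤ ⨅ W1', ⨅ Hb1', f3 W2 W1' Hb1' := ciInf_le b1 W2
      _ ≤ ⨅ Hb1', f3 W2 W1 Hb1' := ciInf_le b2 W1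
      _ ≤ f3 W2 W1 Hb1 := ciInf_le b3 Hb1
      _ ≤ g2 W Hb1 := step
  · -- RHS ≤ LHS
    refine le_ciInf fun W2 => le_ciInf fun W1 => le_ciInf fun Hb1 => ?_
    have hprod := nuclearNorm_mul_le W2 W1
    have hkey : Real.sqrt (lW2 * lW1) * nuclearNorm (W2 * W1)
        ≤ lW2 / 2 * frobSq W2 + lW1 / 2 * frobSq W1 := by
      set p := Real.sqrt (frobSq W2) with hp
      set q := Real.sqrt (frobSq W1) with hq
      have hp2 : p ^ 2 = frobSq W2 := Real.sq_sqrt (frobSq_nonneg W2)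
      have hq2 : q ^ 2 = frobSq W1 := Real.sq_sqrt (frobSq_nonneg W1)
      have hpn : 0 ≤ p := Real.sqrt_nonneg _
      have hqn : 0 ≤ q := Real.sqrt_nonneg _
      have h1 : Real.sqrt (lW2 * lW1) * nuclearNorm (W2 * W1)
          ≤ Real.sqrt (lW2 * lW1) * (p * q) :=
        mul_le_mul_of_nonneg_left hprod (Real.sqrt_nonneg _)
      have h2 : Real.sqrt (lW2 * lW1) * (p * q)
          ≤ lW2 / 2 * p ^ 2 + lW1 / 2 * q ^ 2 := by
        rw [hmul]
        nlinarith [sq_nonneg (Real.sqrt lW2 * p - Real.sqrt lW1 * q),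
          Real.mul_self_sqrt hlW2.le, Real.mul_self_sqrt hlW1.le, hs2.le, hs1.le,
          mul_nonneg hpn hqn]
      rw [hp2, hq2] at h2
      linarith
    have step : g2 (W2 * W1) Hb1 ≤ f3 W2 W1 Hb1 := by
      simp only [hf3, hg2]
      linarith
    have b2 : BddBelow (Set.range fun Hb1' => g2 (W2 * W1) Hb1') :=
      bddBelow_range_of_nonneg _ fun Hb1' => hg2nn (W2 * W1) Hb1'
    have b1 : BddBelow (Set.range fun W : Matrix (Fin K) (Fin d) ℝ =>
        ⨅ Hb1', g2 W Hb1') :=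
      bddBelow_range_of_nonneg _ fun W =>
        Real.iInf_nonneg fun Hb1' => hg2nn W Hb1'
    calc (⨅ W, ⨅ Hb1', g2 W Hb1')
        ≤ ⨅ Hb1', g2 (W2 * W1) Hb1' := ciInf_le b1 (W2 * W1)
      _ ≤ g2 (W2 * W1) Hb1 := ciInf_le b2 Hb1
      _ ≤ f3 W2 W1 Hb1 := step
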